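/- Let σ > −1/2 and s > 0. For every k ∈ ℕ, the generalized Hermite function φ_k satisfies L_σ φ_k = (2k+1+2σ)s · φ_k, where L_σ is the Dunkl harmonic oscillator. -/

import Mathlib

open MeasureTheory Real

noncomputable section

/-- The even part of a function. -/
def evenPart (φ : ℝ → ℝ) : ℝ → ℝ := fun x => (φ x + φ (-x)) / 2

/-- The odd part of a function. -/
def oddPart (φ : ℝ → ℝ) : ℝ → ℝ := fun x => (φ x - φ (-x)) / 2

/-- For an odd smooth function ψ, `invX ψ` is the smooth function η with ψ(x) = x·η(x). -/
def invX (ψ : ℝ → ℝ) : ℝ → ℝ := fun x => if x = 0 then deriv ψ 0 else ψ x / x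

/-- The Dunkl operator `T_σ φ = φ' + 2σ·x⁻¹(φ_odd)`. -/
def dunklT (σ : ℝ) (φ : ℝ → ℝ) : ℝ → ℝ := fun x => deriv φ x + 2 * σ * invX (oddPart φ) x

/-- The Dunkl harmonic oscillator `L_σ φ = -T_σ(T_σ φ) + s²x²φ`. -/
def dunklL (σ s : ℝ) (φ : ℝ → ℝ) : ℝ → ℝ :=
  fun x => -dunklT σ (dunklT σ φ) x + s ^ 2 * x ^ 2 * φ x

/-- Index pairs (i, j) with i + j ≤ m. -/
def idx (m : ℕ) : Finset (ℕ × ℕ) :=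
  (Finset.range (m + 1) ×ˢ Finset.range (m + 1)).filter fun p => p.1 + p.2 ≤ m

def idxE (m : ℕ) : Finset (ℕ × ℕ) := (idx m).filter fun p => Even (p.1 + p.2)

def idxO (m : ℕ) : Finset (ℕ × ℕ) := (idx m).filter fun p => ¬ Even (p.1 + p.2)

/-- The Schwartz norm ‖φ‖_{S^m}. -/
def SNorm (m : ℕ) (φ : ℝ → ℝ) : ℝ :=
  ∑ p ∈ idx m, ⨆ x : ℝ, |x ^ p.1 * iteratedDeriv p.2 φ x|

/-- Generic norm for σ ≥ 0: Σ_{i+j≤m} sup_x |x|^σ |x^i g_j(x)|. -/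
def gNormNonneg (σ : ℝ) (m : ℕ) (g : ℕ → ℝ → ℝ) : ℝ :=
  ∑ p ∈ idx m, ⨆ x : ℝ, |x| ^ σ * |x ^ p.1 * g p.2 x|

/-- Generic norm for σ < 0 on even functions. -/
def gNormNegE (σ : ℝ) (m : ℕ) (g : ℕ → ℝ → ℝ) : ℝ :=
  (∑ p ∈ idxE m, ((⨆ x : {x : ℝ // 0 < |x| ∧ |x| ≤ 1}, |(x : ℝ) ^ p.1 * g p.2 x|) +
      ⨆ x : {x : ℝ // 1 ≤ |x|}, |(x : ℝ)| ^ σ * |(x : ℝ) ^ p.1 * g p.2 x|)) +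
  ∑ p ∈ idxO m, ⨆ x : {x : ℝ // x ≠ 0}, |(x : ℝ)| ^ σ * |(x : ℝ) ^ p.1 * g p.2 x|

/-- Generic norm for σ < 0 on odd functions. -/
def gNormNegO (σ : ℝ) (m : ℕ) (g : ℕ → ℝ → ℝ) : ℝ :=
  (∑ p ∈ idxO m, ((⨆ x : {x : ℝ // 0 < |x| ∧ |x| ≤ 1}, |(x : ℝ) ^ p.1 * g p.2 x|) +
      ⨆ x : {x : ℝ // 1 ≤ |x|}, |(x : ℝ)| ^ σ * |(x : ℝ) ^ p.1 * g p.2 x|)) +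
  ∑ p ∈ idxE m, ⨆ x : {x : ℝ // x ≠ 0}, |(x : ℝ)| ^ σ * |(x : ℝ) ^ p.1 * g p.2 x|

/-- The family of iterated derivatives of φ. -/
def derivFam (φ : ℝ → ℝ) : ℕ → ℝ → ℝ := fun j => iteratedDeriv j φ

/-- The family of iterates of the Dunkl operator applied to φ. -/
def dunklFam (σ : ℝ) (φ : ℝ → ℝ) : ℕ → ℝ → ℝ := fun j => (dunklT σ)^[j] φ

/-- Weakly perturbed Schwartz norm ‖φ‖_{S_{w,σ}^m} for even φ. -/
def SwNormEven (σ : ℝ) (m : ℕ) (φ : ℝ → ℝ) : ℝ :=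
  if 0 ≤ σ then gNormNonneg σ m (derivFam φ) else gNormNegE σ m (derivFam φ)

/-- Weakly perturbed Schwartz norm ‖φ‖_{S_{w,σ}^m} for odd φ. -/
def SwNormOdd (σ : ℝ) (m : ℕ) (φ : ℝ → ℝ) : ℝ :=
  if 0 ≤ σ then gNormNonneg σ m (derivFam φ) else gNormNegO σ m (derivFam φ)

/-- Perturbed Schwartz norm ‖φ‖_{S_σ^m} for even φ. -/
def SpNormEven (σ : ℝ) (m : ℕ) (φ : ℝ → ℝ) : ℝ :=
  if 0 ≤ σ then gNormNonneg σ m (dunklFam σ φ) else gNormNegE σ m (dunklFam σ φ)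

/-- Perturbed Schwartz norm ‖φ‖_{S_σ^m} for odd φ. -/
def SpNormOdd (σ : ℝ) (m : ℕ) (φ : ℝ → ℝ) : ℝ :=
  if 0 ≤ σ then gNormNonneg σ m (dunklFam σ φ) else gNormNegO σ m (dunklFam σ φ)

/-- Perturbed Schwartz norm for a general φ: the sum of the norms of its even and odd parts. -/
def SpNorm (σ : ℝ) (m : ℕ) (φ : ℝ → ℝ) : ℝ :=
  SpNormEven σ m (evenPart φ) + SpNormOdd σ m (oddPart φ)

/-- The perturbed Sobolev norm ‖φ‖_{W_σ^m} = ⟨(1+L_σ)^m φ, φ⟩_σ^{1/2}. -/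
def WNorm (σ s : ℝ) (m : ℕ) (φ : ℝ → ℝ) : ℝ :=
  Real.sqrt (∫ x : ℝ, ((fun ψ => ψ + dunklL σ s ψ)^[m] φ) x * φ x * |x| ^ (2 * σ))

/-- The Dunkl creation operator `B' φ = sxφ - T_σ φ`. -/
def Bop' (σ s : ℝ) (φ : ℝ → ℝ) : ℝ → ℝ := fun x => s * x * φ x - dunklT σ φ x

/-- The generalized Hermite functions φ_k. -/
def hermiteFn (σ s : ℝ) : ℕ → ℝ → ℝ
  | 0 => fun x => s ^ ((2 * σ + 1) / 4) * (Real.Gamma (σ + 1 / 2)) ^ (-(1 / 2) : ℝ) *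
      Real.exp (-s * x ^ 2 / 2)
  | (k + 1) =>
      if Even (k + 1) then
        fun x => (2 * ((k : ℝ) + 1) * s) ^ (-(1 / 2) : ℝ) * Bop' σ s (hermiteFn σ s k) x
      else
        fun x => (2 * ((k : ℝ) + 1 + 2 * σ) * s) ^ (-(1 / 2) : ℝ) * Bop' σ s (hermiteFn σ s k) x

/-- The perturbed factorial m!_σ. -/
def pfact (σ : ℝ) : ℕ → ℝ
  | 0 => 1
  | (m + 1) =>
      if Even (m + 1) then pfact σ m * ((m : ℝ) + 1)
      else pfact σ m * ((m : ℝ) + 1 + 2 * σ)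

/-- The generalized Hermite polynomials p_k = φ_k · e^{sx²/2}. -/
def genHermitePoly (σ s : ℝ) (k : ℕ) : ℝ → ℝ :=
  fun x => hermiteFn σ s k x * Real.exp (s * x ^ 2 / 2)

end

noncomputable section Aux

open Polynomial

/-- Even representative: `A(x²)·e^{-sx²/2}`. -/
def fEv (s : ℝ) (A : ℝ[X]) : ℝ → ℝ := fun x => A.eval (x ^ 2) * Real.exp (-s * x ^ 2 / 2)

/-- Odd representative: `x·B(x²)·e^{-sx²/2}`. -/
def fOd (s : ℝ) (B : ℝ[X]) : ℝ → ℝ := fun x => x * B.eval (x ^ 2) * Real.exp (-s * x ^ 2 / 2)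

/-- Dunkl operator on even representatives, at the polynomial level. -/
def pTeo (s : ℝ) (A : ℝ[X]) : ℝ[X] := C 2 * derivative A - C s * A

/-- Dunkl operator on odd representatives, at the polynomial level. -/
def pToe (σ s : ℝ) (B : ℝ[X]) : ℝ[X] :=
  (1 + C 2 * C σ) * B + C 2 * X * derivative B - C s * X * B

def pLE (σ s : ℝ) (A : ℝ[X]) : ℝ[X] := C s ^ 2 * X * A - pToe σ s (pTeo s A)

def pLO (σ s : ℝ) (B : ℝ[X]) : ℝ[X] := C s ^ 2 * X * B - pTeo s (pToe σ s B)

def pBE (s : ℝ) (A : ℝ[X]) : ℝ[X] := C s * A - pTeo s A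

def pBO (σ s : ℝ) (B : ℝ[X]) : ℝ[X] := C s * X * B - pToe σ s B

lemma gauss_hasDerivAt (s x : ℝ) :
    HasDerivAt (fun x : ℝ => Real.exp (-s * x ^ 2 / 2)) (-(s * x) * Real.exp (-s * x ^ 2 / 2)) x := by
  have h : HasDerivAt (fun x : ℝ => -s * x ^ 2 / 2) (-(s * x)) x := by
    have := ((hasDerivAt_pow 2 x).const_mul (-s)).div_const 2
    refine this.congr_deriv ?_
    ring
  have := h.exp
  convert this using 1
  ring

lemma polysq_hasDerivAt (A : ℝ[X]) (x : ℝ) :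
    HasDerivAt (fun x : ℝ => A.eval (x ^ 2)) (2 * x * A.derivative.eval (x ^ 2)) x := by
  have := (A.hasDerivAt (x ^ 2)).comp x (hasDerivAt_pow 2 x)
  refine this.congr_deriv ?_
  ring

lemma fEv_hasDerivAt (s : ℝ) (A : ℝ[X]) (x : ℝ) :
    HasDerivAt (fEv s A) (fOd s (pTeo s A) x) x := by
  have := (polysq_hasDerivAt A x).mul (gauss_hasDerivAt s x)
  refine this.congr_deriv ?_
  simp [fOd, pTeo]
  ring

lemma fOd_hasDerivAt (s : ℝ) (B : ℝ[X]) (x : ℝ) :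
    HasDerivAt (fOd s B)
      ((B.eval (x ^ 2) + 2 * x ^ 2 * B.derivative.eval (x ^ 2) - s * x ^ 2 * B.eval (x ^ 2)) *
        Real.exp (-s * x ^ 2 / 2)) x := by
  have := ((hasDerivAt_id x).mul (polysq_hasDerivAt B x)).mul (gauss_hasDerivAt s x)
  refine this.congr_deriv ?_
  simp only [id, Pi.mul_apply]
  ring

lemma oddPart_fEv (s : ℝ) (A : ℝ[X]) : oddPart (fEv s A) = fun _ => 0 := by
  funext x
  simp [oddPart, fEv, neg_sq]

lemma oddPart_fOd (s : ℝ) (B : ℝ[X]) : oddPart (fOd s B) = fOd s B := by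
  funext x
  simp only [oddPart, fOd, neg_sq]
  ring

lemma invX_zero : invX (fun _ => (0 : ℝ)) = fun _ => 0 := by
  funext x
  simp [invX]

lemma invX_fOd (s : ℝ) (B : ℝ[X]) :
    invX (fOd s B) = fun x => B.eval (x ^ 2) * Real.exp (-s * x ^ 2 / 2) := by
  funext x
  rw [invX]
  split_ifs with hx
  · subst hx
    rw [(fOd_hasDerivAt s B 0).deriv]
    norm_num
  · rw [fOd]
    field_simp

lemma dunklT_fEv (σ s : ℝ) (A : ℝ[X]) : dunklT σ (fEv s A) = fOd s (pTeo s A) := by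
  funext x
  rw [dunklT, oddPart_fEv, invX_zero, (fEv_hasDerivAt s A x).deriv]
  simp

lemma dunklT_fOd (σ s : ℝ) (B : ℝ[X]) : dunklT σ (fOd s B) = fEv s (pToe σ s B) := by
  funext x
  rw [dunklT, oddPart_fOd, invX_fOd, (fOd_hasDerivAt s B x).deriv]
  simp only [fEv, pToe, Polynomial.eval_sub, Polynomial.eval_add, Polynomial.eval_mul,
    Polynomial.eval_one, Polynomial.eval_C, Polynomial.eval_X]
  ring

lemma dunklL_fEv (σ s : ℝ) (A : ℝ[X]) : dunklL σ s (fEv s A) = fEv s (pLE σ s A) := by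
  funext x
  rw [dunklL, dunklT_fEv, dunklT_fOd]
  simp only [fEv, pLE, Polynomial.eval_sub, Polynomial.eval_mul, Polynomial.eval_pow,
    Polynomial.eval_C, Polynomial.eval_X]
  ring

lemma dunklL_fOd (σ s : ℝ) (B : ℝ[X]) : dunklL σ s (fOd s B) = fOd s (pLO σ s B) := by
  funext x
  rw [dunklL, dunklT_fOd, dunklT_fEv]
  simp only [fOd, pLO, Polynomial.eval_sub, Polynomial.eval_mul, Polynomial.eval_pow,
    Polynomial.eval_C, Polynomial.eval_X]
  ring

lemma Bop'_fEv (σ s : ℝ) (A : ℝ[X]) : Bop' σ s (fEv s A) = fOd s (pBE s A) := by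
  funext x
  rw [Bop', dunklT_fEv]
  simp only [fEv, fOd, pBE, Polynomial.eval_sub, Polynomial.eval_mul, Polynomial.eval_C]
  ring

lemma Bop'_fOd (σ s : ℝ) (B : ℝ[X]) : Bop' σ s (fOd s B) = fEv s (pBO σ s B) := by
  funext x
  rw [Bop', dunklT_fOd]
  simp only [fEv, fOd, pBO, Polynomial.eval_sub, Polynomial.eval_mul, Polynomial.eval_C,
    Polynomial.eval_X]
  ring

lemma pLE_smul (σ s c : ℝ) (A : ℝ[X]) : pLE σ s (C c * A) = C c * pLE σ s A := by
  simp only [pLE, pToe, pTeo, derivative_mul, derivative_C, derivative_sub, derivative_add,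
    derivative_X, zero_mul, zero_add]
  ring

lemma pLO_smul (σ s c : ℝ) (B : ℝ[X]) : pLO σ s (C c * B) = C c * pLO σ s B := by
  simp only [pLO, pToe, pTeo, derivative_mul, derivative_C, derivative_sub, derivative_add,
    derivative_X, derivative_one, zero_mul, zero_add]
  ring

lemma pol_even (σ s lam : ℝ) (A : ℝ[X]) (h : pLE σ s A = C lam * A) :
    pLO σ s (pBE s A) = C (lam + 2 * s) * pBE s A := by
  have h' := congrArg derivative h
  simp only [pLE, pLO, pBE, pTeo, pToe, derivative_mul, derivative_add, derivative_sub,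
    derivative_C, derivative_X, derivative_one, derivative_pow, zero_mul, zero_add, mul_one,
    add_zero, mul_zero] at h h' ⊢
  simp only [map_add, map_mul, map_ofNat, map_one] at h h' ⊢
  linear_combination (2 * C s) * h - 2 * h'

lemma pol_odd (σ s lam : ℝ) (B : ℝ[X]) (h : pLO σ s B = C lam * B) :
    pLE σ s (pBO σ s B) = C (lam + 2 * s) * pBO σ s B := by
  have h' := congrArg derivative h
  simp only [pLE, pLO, pBO, pTeo, pToe, derivative_mul, derivative_add, derivative_sub,
    derivative_C, derivative_X, derivative_one, derivative_pow, zero_mul, zero_add, mul_one,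
    add_zero, mul_zero] at h h' ⊢
  simp only [map_add, map_mul, map_ofNat, map_one] at h h' ⊢
  linear_combination (2 * C s * X - 1 - 2 * C σ) * h - 2 * X * h'

lemma hermiteFn_rep (σ s : ℝ) (k : ℕ) :
    (Even k → ∃ A : ℝ[X], hermiteFn σ s k = fEv s A ∧
      pLE σ s A = C ((2 * (k : ℝ) + 1 + 2 * σ) * s) * A) ∧
    (¬ Even k → ∃ B : ℝ[X], hermiteFn σ s k = fOd s B ∧
      pLO σ s B = C ((2 * (k : ℝ) + 1 + 2 * σ) * s) * B) := by
  induction k with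
  | zero =>
    refine ⟨fun _ => ⟨C (s ^ ((2 * σ + 1) / 4) * (Real.Gamma (σ + 1 / 2)) ^ (-(1 / 2) : ℝ)), ?_, ?_⟩,
      fun h => absurd Even.zero h⟩
    · funext x
      simp [hermiteFn, fEv, mul_assoc]
    · simp only [pLE, pToe, pTeo, derivative_C, mul_zero, zero_sub, derivative_mul,
        derivative_neg, zero_mul, zero_add, Nat.cast_zero]
      simp only [map_add, map_mul, map_ofNat, map_one]
      ring
  | succ k ih =>
    by_cases hk : Even (k + 1)
    · refine ⟨fun _ => ?_, fun h => absurd hk h⟩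
      have hko : ¬ Even k := by simpa [Nat.even_add_one] using hk
      obtain ⟨B, hB, hLB⟩ := ih.2 hko
      refine ⟨C ((2 * ((k : ℝ) + 1) * s) ^ (-(1 / 2) : ℝ)) * pBO σ s B, ?_, ?_⟩
      · funext x
        rw [hermiteFn, if_pos hk, hB, Bop'_fOd]
        simp only [fEv, Polynomial.eval_mul, Polynomial.eval_C]
        ring
      · rw [pLE_smul, pol_odd σ s _ B hLB]
        push_cast
        ring_nf
    · refine ⟨fun h => absurd h hk, fun _ => ?_⟩
      have hke : Even k := by simpa [Nat.even_add_one] using hk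
      obtain ⟨A, hA, hLA⟩ := ih.1 hke
      refine ⟨C ((2 * ((k : ℝ) + 1 + 2 * σ) * s) ^ (-(1 / 2) : ℝ)) * pBE s A, ?_, ?_⟩
      · funext x
        rw [hermiteFn, if_neg hk, hA, Bop'_fEv]
        simp only [fOd, Polynomial.eval_mul, Polynomial.eval_C]
        ring
      · rw [pLO_smul, pol_even σ s _ A hLA]
        push_cast
        ring_nf

end Aux

theorem hermiteFn_is_eigenfunction (σ s : ℝ) (hσ : -(1/2) < σ) (hs : 0 < s) (k : ℕ) :
    ∀ x : ℝ, dunklL σ s (hermiteFn σ s k) x = (2 * (k : ℝ) + 1 + 2 * σ) * s * hermiteFn σ s k x := by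
  intro x
  by_cases hk : Even k
  · obtain ⟨A, hA, hLA⟩ := (hermiteFn_rep σ s k).1 hk
    rw [hA, dunklL_fEv, hLA]
    simp only [fEv, Polynomial.eval_mul, Polynomial.eval_C]
    ring
  · obtain ⟨B, hB, hLB⟩ := (hermiteFn_rep σ s k).2 hk
    rw [hB, dunklL_fOd, hLB]
    simp only [fOd, Polynomial.eval_mul, Polynomial.eval_C]
    ring
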